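/- For every l ≥ 0, the space of ℝ²-valued polynomial vector fields of total degree ≤ l on ℝ² decomposes as a direct sum ℛ^l ⊕ ℛ^{c,l}, where ℛ^l = { rot p := (∂₂p, −∂₁p) : p polynomial of degree ≤ l+1 } and ℛ^{c,l} = { x q : q polynomial of degree ≤ l−1 }. -/

import Mathlib

open MvPolynomial Finsupp

/-- ℝ²-valued polynomial vector fields with components of total degree ≤ l. -/
noncomputable def polyVec2 (l : ℕ) : Submodule ℝ (Fin 2 → MvPolynomial (Fin 2) ℝ) :=
  Submodule.pi Set.univ fun _ => MvPolynomial.restrictTotalDegree (Fin 2) ℝ l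

/-- ℛ^l = vector curls (rot p = (∂₂p, −∂₁p)) of polynomials of degree ≤ l+1. -/
noncomputable def Rsp2 (l : ℕ) : Submodule ℝ (Fin 2 → MvPolynomial (Fin 2) ℝ) :=
  Submodule.span ℝ {v | ∃ p : MvPolynomial (Fin 2) ℝ,
    p.totalDegree ≤ l + 1 ∧ v = ![MvPolynomial.pderiv 1 p, -(MvPolynomial.pderiv 0 p)]}

/-- The coordinate vector x = (x₁, x₂). -/
noncomputable def xvec2 : Fin 2 → MvPolynomial (Fin 2) ℝ := ![X 0, X 1]

/-- ℛ^{c,l} = x 𝒫^{l−1} (reduced to {0} when l = 0). -/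
noncomputable def Rcsp2 (l : ℕ) : Submodule ℝ (Fin 2 → MvPolynomial (Fin 2) ℝ) :=
  Submodule.span ℝ {v | ∃ q : MvPolynomial (Fin 2) ℝ,
    q.totalDegree + 1 ≤ l ∧ v = fun i => xvec2 i * q}


lemma fsum_eq (m : Fin 2 →₀ ℕ) : (m.sum fun _ e => e) = m 0 + m 1 := by
  rw [Finsupp.sum_fintype _ _ (fun _ => rfl), Fin.sum_univ_two]

lemma fsum_eq' (m : Fin 2 →₀ ℕ) : (m.sum fun _ => id) = m 0 + m 1 := fsum_eq m

lemma coeff_pderiv' (i : Fin 2) (m : Fin 2 →₀ ℕ) (p : MvPolynomial (Fin 2) ℝ) :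
    coeff m (pderiv i p) = ((m i : ℝ) + 1) * coeff (m + Finsupp.single i 1) p := by
  induction p using MvPolynomial.induction_on' with
  | add p q hp hq => simp [hp, hq, mul_add]
  | monomial s a =>
    rw [pderiv_monomial, coeff_monomial, coeff_monomial]
    by_cases h : s = m + Finsupp.single i 1
    · subst h
      have h1 : m + Finsupp.single i 1 - Finsupp.single i 1 = m := by
        ext j; simp only [Finsupp.coe_tsub, Finsupp.coe_add, Pi.sub_apply, Pi.add_apply,
          Finsupp.single_apply]; split <;> omega
      have h2 : ((m + Finsupp.single i 1 : Fin 2 →₀ ℕ)) i = m i + 1 := by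
        simp [Finsupp.add_apply]
      rw [if_pos h1, if_pos rfl, h2]; push_cast; ring
    · rw [if_neg h]
      by_cases h2 : s - Finsupp.single i 1 = m
      · rw [if_pos h2]
        have hsi : s i = 0 := by
          by_contra hsi
          apply h; ext j
          have := DFunLike.congr_fun h2 j
          rcases eq_or_ne i j with hij | hij
          · subst hij
            simp at this ⊢
            omega
          · simp only [Finsupp.coe_tsub, Pi.sub_apply, Finsupp.single_apply, if_neg hij,
              Finsupp.add_apply] at this ⊢
            omega
        simp [hsi]
      · rw [if_neg h2]; ring

lemma totalDegree_pderiv_succ_le {l : ℕ} {p : MvPolynomial (Fin 2) ℝ}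
    (hp : p.totalDegree ≤ l + 1) (i : Fin 2) : (pderiv i p).totalDegree ≤ l := by
  apply Finset.sup_le
  intro m hm
  rw [MvPolynomial.mem_support_iff, coeff_pderiv'] at hm
  have h1 : coeff (m + Finsupp.single i 1) p ≠ 0 := by
    intro h; rw [h, mul_zero] at hm; exact hm rfl
  have h2 := le_totalDegree (MvPolynomial.mem_support_iff.mpr h1)
  have h3 := h2.trans hp
  rw [fsum_eq] at h3 ⊢
  have h4 : ((m + Finsupp.single i 1 : Fin 2 →₀ ℕ)) 0 + ((m + Finsupp.single i 1 : Fin 2 →₀ ℕ)) 1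
      = m 0 + m 1 + 1 := by
    fin_cases i <;> simp [Finsupp.add_apply, Finsupp.single_apply] <;> ring
  omega

noncomputable def rotL : MvPolynomial (Fin 2) ℝ →ₗ[ℝ] (Fin 2 → MvPolynomial (Fin 2) ℝ) :=
  LinearMap.pi ![(pderiv 1).toLinearMap, -(pderiv 0).toLinearMap]

lemma rotL_apply (p : MvPolynomial (Fin 2) ℝ) :
    rotL p = ![pderiv 1 p, -(pderiv 0 p)] := by
  funext i; fin_cases i <;> rfl

noncomputable def mulXL : MvPolynomial (Fin 2) ℝ →ₗ[ℝ] (Fin 2 → MvPolynomial (Fin 2) ℝ) :=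
  LinearMap.pi fun i => LinearMap.mulLeft ℝ (xvec2 i)

lemma mulXL_apply (q : MvPolynomial (Fin 2) ℝ) :
    mulXL q = fun i => xvec2 i * q := rfl

lemma Rsp2_eq (l : ℕ) :
    Rsp2 l = Submodule.map rotL (restrictTotalDegree (Fin 2) ℝ (l + 1)) := by
  apply le_antisymm
  · rw [Rsp2, Submodule.span_le]
    rintro v ⟨p, hp, rfl⟩
    exact ⟨p, (mem_restrictTotalDegree _ _ _).mpr hp, rotL_apply p⟩
  · rintro v ⟨p, hp, rfl⟩
    exact Submodule.subset_span ⟨p, (mem_restrictTotalDegree _ _ _).mp hp, rotL_apply p⟩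

lemma Rcsp2_zero : Rcsp2 0 = ⊥ := by
  rw [Rcsp2, Submodule.span_eq_bot]
  rintro v ⟨q, hq, rfl⟩
  omega

lemma Rcsp2_eq (l : ℕ) (hl : 1 ≤ l) :
    Rcsp2 l = Submodule.map mulXL (restrictTotalDegree (Fin 2) ℝ (l - 1)) := by
  apply le_antisymm
  · rw [Rcsp2, Submodule.span_le]
    rintro v ⟨q, hq, rfl⟩
    exact ⟨q, (mem_restrictTotalDegree _ _ _).mpr (by omega), rfl⟩
  · rintro v ⟨q, hq, rfl⟩
    refine Submodule.subset_span ⟨q, ?_, rfl⟩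
    have := (mem_restrictTotalDegree _ _ _).mp hq
    omega

lemma finsupp_fin2_ext {m m' : Fin 2 →₀ ℕ} (h0 : m 0 = m' 0) (h1 : m 1 = m' 1) : m = m' := by
  ext j; fin_cases j <;> assumption

lemma shuffle01 (m : Fin 2 →₀ ℕ) :
    m + Finsupp.single 1 1 - Finsupp.single 0 1
      = Finsupp.single 1 1 + (m - Finsupp.single 0 1) := by
  apply finsupp_fin2_ext <;>
    simp [Finsupp.add_apply, Finsupp.single_apply, Finsupp.tsub_apply, Nat.add_comm]

lemma shuffle10 (m : Fin 2 →₀ ℕ) :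
    m + Finsupp.single 0 1 - Finsupp.single 1 1
      = Finsupp.single 0 1 + (m - Finsupp.single 1 1) := by
  apply finsupp_fin2_ext <;>
    simp [Finsupp.add_apply, Finsupp.single_apply, Finsupp.tsub_apply, Nat.add_comm]

lemma X_mul_mono (i : Fin 2) (t : Fin 2 →₀ ℕ) (r : ℝ) :
    X i * monomial t r = monomial (Finsupp.single i 1 + t) r := by
  rw [← pow_one (X i : MvPolynomial (Fin 2) ℝ), ← monomial_single_add]

lemma X0_mul_q (m : Fin 2 →₀ ℕ) (r : ℝ) :
    X 0 * monomial (m - Finsupp.single 0 1) ((m 0 : ℝ) * r)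
      = monomial m ((m 0 : ℝ) * r) := by
  rcases Nat.eq_zero_or_pos (m 0) with h0 | h0
  · simp [h0]
  · rw [X_mul_mono]
    have : Finsupp.single (0 : Fin 2) 1 + (m - Finsupp.single 0 1) = m := by
      apply finsupp_fin2_ext <;>
        simp [Finsupp.add_apply, Finsupp.single_apply, Finsupp.tsub_apply] <;> omega
    rw [this]

lemma X1_mul_q (m : Fin 2 →₀ ℕ) (r : ℝ) :
    X 1 * monomial (m - Finsupp.single 1 1) ((m 1 : ℝ) * r)
      = monomial m ((m 1 : ℝ) * r) := by
  rcases Nat.eq_zero_or_pos (m 1) with h0 | h0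
  · simp [h0]
  · rw [X_mul_mono]
    have : Finsupp.single (1 : Fin 2) 1 + (m - Finsupp.single 1 1) = m := by
      apply finsupp_fin2_ext <;>
        simp [Finsupp.add_apply, Finsupp.single_apply, Finsupp.tsub_apply] <;> omega
    rw [this]

lemma single0_monomial_mem (l : ℕ) (m : Fin 2 →₀ ℕ) (c : ℝ) (hm : m 0 + m 1 ≤ l) :
    Pi.single (0 : Fin 2) (monomial m c) ∈ Rsp2 l ⊔ Rcsp2 l := by
  have hne : (((m 0 : ℝ) + m 1) + 1) ≠ 0 := by positivity
  set d : ℝ := c / ((m 0 : ℝ) + m 1 + 1) with hd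
  set p : MvPolynomial (Fin 2) ℝ := monomial (m + Finsupp.single 1 1) d with hp
  set q : MvPolynomial (Fin 2) ℝ := monomial (m - Finsupp.single 0 1) ((m 0 : ℝ) * d) with hq
  have e1 : pderiv 1 p = monomial m (d * ((m 1 : ℝ) + 1)) := by
    rw [hp, pderiv_monomial]
    have h1 : m + Finsupp.single 1 1 - Finsupp.single 1 1 = m := by
      apply finsupp_fin2_ext <;>
        simp [Finsupp.add_apply, Finsupp.single_apply, Finsupp.tsub_apply]
    have h2 : ((m + Finsupp.single 1 1 : Fin 2 →₀ ℕ)) 1 = m 1 + 1 := by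
      simp [Finsupp.add_apply]
    rw [h1, h2]; push_cast; ring_nf
  have e0 : pderiv 0 p = monomial (m + Finsupp.single 1 1 - Finsupp.single 0 1)
      (d * (m 0 : ℝ)) := by
    rw [hp, pderiv_monomial]
    have h2 : ((m + Finsupp.single 1 1 : Fin 2 →₀ ℕ)) 0 = m 0 := by
      simp [Finsupp.add_apply, Finsupp.single_apply]
    rw [h2]
  have comp0 : pderiv 1 p + X 0 * q = monomial m c := by
    rw [e1, hq, X0_mul_q, ← map_add]
    congr 1
    rw [hd]; field_simp; ring
  have comp1 : -(pderiv 0 p) + X 1 * q = 0 := by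
    rw [e0, hq, X_mul_mono, ← shuffle01, mul_comm ((m 0 : ℝ)) d, neg_add_cancel]
  have hsum : Pi.single (0 : Fin 2) (monomial m c)
      = ![pderiv 1 p, -(pderiv 0 p)] + fun i => xvec2 i * q := by
    funext j; fin_cases j
    · simpa [xvec2] using comp0.symm
    · simpa [xvec2] using comp1.symm
  rw [hsum]
  apply Submodule.add_mem
  · apply Submodule.mem_sup_left
    apply Submodule.subset_span
    refine ⟨p, ?_, rfl⟩
    refine (totalDegree_monomial_le _ _).trans ?_
    rw [fsum_eq']
    have : ((m + Finsupp.single 1 1 : Fin 2 →₀ ℕ)) 0 = m 0 := by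
      simp [Finsupp.add_apply, Finsupp.single_apply]
    have h2 : ((m + Finsupp.single 1 1 : Fin 2 →₀ ℕ)) 1 = m 1 + 1 := by
      simp [Finsupp.add_apply]
    omega
  · apply Submodule.mem_sup_right
    rcases Nat.eq_zero_or_pos (m 0) with h0 | h0
    · have hq0 : q = 0 := by rw [hq, h0]; simp
      have : (fun i => xvec2 i * q) = (0 : Fin 2 → MvPolynomial (Fin 2) ℝ) := by
        funext i; rw [hq0]; simp
      rw [this]; exact Submodule.zero_mem _
    · apply Submodule.subset_span
      refine ⟨q, ?_, rfl⟩
      have : q.totalDegree ≤ (m 0 - 1) + m 1 := by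
        refine (totalDegree_monomial_le _ _).trans ?_
        rw [fsum_eq']
        simp [Finsupp.tsub_apply, Finsupp.single_apply]
      omega

lemma single1_monomial_mem (l : ℕ) (m : Fin 2 →₀ ℕ) (c : ℝ) (hm : m 0 + m 1 ≤ l) :
    Pi.single (1 : Fin 2) (monomial m c) ∈ Rsp2 l ⊔ Rcsp2 l := by
  have hne : (((m 0 : ℝ) + m 1) + 1) ≠ 0 := by positivity
  set d : ℝ := c / ((m 0 : ℝ) + m 1 + 1) with hd
  set p : MvPolynomial (Fin 2) ℝ := monomial (m + Finsupp.single 0 1) (-d) with hp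
  set q : MvPolynomial (Fin 2) ℝ := monomial (m - Finsupp.single 1 1) ((m 1 : ℝ) * d) with hq
  have e0 : pderiv 0 p = monomial m (-d * ((m 0 : ℝ) + 1)) := by
    rw [hp, pderiv_monomial]
    have h1 : m + Finsupp.single 0 1 - Finsupp.single 0 1 = m := by
      apply finsupp_fin2_ext <;>
        simp [Finsupp.add_apply, Finsupp.single_apply, Finsupp.tsub_apply]
    have h2 : ((m + Finsupp.single 0 1 : Fin 2 →₀ ℕ)) 0 = m 0 + 1 := by
      simp [Finsupp.add_apply]
    rw [h1, h2]; push_cast; ring_nf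
  have e1 : pderiv 1 p = monomial (m + Finsupp.single 0 1 - Finsupp.single 1 1)
      (-d * (m 1 : ℝ)) := by
    rw [hp, pderiv_monomial]
    have h2 : ((m + Finsupp.single 0 1 : Fin 2 →₀ ℕ)) 1 = m 1 := by
      simp [Finsupp.add_apply, Finsupp.single_apply]
    rw [h2]
  have comp0 : pderiv 1 p + X 0 * q = 0 := by
    rw [e1, hq, X_mul_mono, ← shuffle10, ← map_add]
    have : -d * (m 1 : ℝ) + (m 1 : ℝ) * d = 0 := by ring
    rw [this, map_zero]
  have comp1 : -(pderiv 0 p) + X 1 * q = monomial m c := by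
    rw [e0, hq, X1_mul_q, ← map_neg, ← map_add]
    congr 1
    rw [hd]; field_simp; ring
  have hsum : Pi.single (1 : Fin 2) (monomial m c)
      = ![pderiv 1 p, -(pderiv 0 p)] + fun i => xvec2 i * q := by
    funext j; fin_cases j
    · simpa [xvec2] using comp0.symm
    · simpa [xvec2] using comp1.symm
  rw [hsum]
  apply Submodule.add_mem
  · apply Submodule.mem_sup_left
    apply Submodule.subset_span
    refine ⟨p, ?_, rfl⟩
    refine (totalDegree_monomial_le _ _).trans ?_
    rw [fsum_eq']
    have h1 : ((m + Finsupp.single 0 1 : Fin 2 →₀ ℕ)) 0 = m 0 + 1 := by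
      simp [Finsupp.add_apply]
    have h2 : ((m + Finsupp.single 0 1 : Fin 2 →₀ ℕ)) 1 = m 1 := by
      simp [Finsupp.add_apply, Finsupp.single_apply]
    omega
  · apply Submodule.mem_sup_right
    rcases Nat.eq_zero_or_pos (m 1) with h0 | h0
    · have hq0 : q = 0 := by rw [hq, h0]; simp
      have : (fun i => xvec2 i * q) = (0 : Fin 2 → MvPolynomial (Fin 2) ℝ) := by
        funext i; rw [hq0]; simp
      rw [this]; exact Submodule.zero_mem _
    · apply Submodule.subset_span
      refine ⟨q, ?_, rfl⟩
      have : q.totalDegree ≤ m 0 + (m 1 - 1) := by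
        refine (totalDegree_monomial_le _ _).trans ?_
        rw [fsum_eq']
        simp [Finsupp.tsub_apply, Finsupp.single_apply]
      omega

lemma single_mem (l : ℕ) (i : Fin 2) (p : MvPolynomial (Fin 2) ℝ) (hp : p.totalDegree ≤ l) :
    Pi.single i p ∈ Rsp2 l ⊔ Rcsp2 l := by
  have hrw : (Pi.single i p : Fin 2 → MvPolynomial (Fin 2) ℝ)
      = ∑ m ∈ p.support, (Pi.single i (monomial m (coeff m p))
          : Fin 2 → MvPolynomial (Fin 2) ℝ) := by
    have hs : ∀ r : MvPolynomial (Fin 2) ℝ, Pi.single i r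
        = LinearMap.single ℝ (fun _ : Fin 2 => MvPolynomial (Fin 2) ℝ) i r := fun _ => rfl
    simp only [hs]
    rw [← map_sum, ← as_sum]
  rw [hrw]
  apply Submodule.sum_mem
  intro m hm
  have hdeg : m 0 + m 1 ≤ l := by
    have := (le_totalDegree hm).trans hp
    rw [fsum_eq] at this; exact this
  fin_cases i
  · exact single0_monomial_mem l m _ hdeg
  · exact single1_monomial_mem l m _ hdeg

lemma polyVec2_le_sup (l : ℕ) : polyVec2 l ≤ Rsp2 l ⊔ Rcsp2 l := by
  intro f hf
  have hsplit : f = Pi.single (0 : Fin 2) (f 0) + Pi.single (1 : Fin 2) (f 1) := by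
    funext j; fin_cases j <;> simp
  rw [hsplit]
  rw [polyVec2, Submodule.mem_pi] at hf
  have h0 := hf 0 trivial
  have h1 := hf 1 trivial
  rw [mem_restrictTotalDegree] at h0 h1
  exact Submodule.add_mem _ (single_mem l 0 _ h0) (single_mem l 1 _ h1)

lemma sup_le_polyVec2 (l : ℕ) : Rsp2 l ⊔ Rcsp2 l ≤ polyVec2 l := by
  apply sup_le
  · rw [Rsp2, Submodule.span_le]
    rintro v ⟨p, hp, rfl⟩
    rw [SetLike.mem_coe, polyVec2, Submodule.mem_pi]
    intro i _
    rw [mem_restrictTotalDegree]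
    fin_cases i
    · simpa using totalDegree_pderiv_succ_le hp 1
    · simpa [totalDegree_neg] using totalDegree_pderiv_succ_le hp 0
  · rw [Rcsp2, Submodule.span_le]
    rintro v ⟨q, hq, rfl⟩
    rw [SetLike.mem_coe, polyVec2, Submodule.mem_pi]
    intro i _
    rw [mem_restrictTotalDegree]
    have hx : (xvec2 i).totalDegree = 1 := by
      fin_cases i <;> simp [xvec2, totalDegree_X]
    calc (xvec2 i * q).totalDegree ≤ (xvec2 i).totalDegree + q.totalDegree :=
          totalDegree_mul _ _
      _ ≤ l := by rw [hx]; omega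

lemma pderiv01_comm (p : MvPolynomial (Fin 2) ℝ) :
    pderiv 0 (pderiv 1 p) = pderiv 1 (pderiv 0 p) := by
  induction p using MvPolynomial.induction_on' with
  | add p q hp hq => simp [hp, hq]
  | monomial s a =>
    simp only [pderiv_monomial]
    have h1 : s - Finsupp.single 1 1 - Finsupp.single 0 1
        = s - Finsupp.single 0 1 - Finsupp.single 1 1 := by
      apply finsupp_fin2_ext <;> simp [Finsupp.tsub_apply, Finsupp.single_apply]
    have h2 : ((s - Finsupp.single 1 1 : Fin 2 →₀ ℕ)) 0 = s 0 := by
      simp [Finsupp.tsub_apply, Finsupp.single_apply]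
    have h3 : ((s - Finsupp.single 0 1 : Fin 2 →₀ ℕ)) 1 = s 1 := by
      simp [Finsupp.tsub_apply, Finsupp.single_apply]
    rw [h1, h2, h3]
    ring_nf

lemma coeff_X_mul_pderiv (i : Fin 2) (m : Fin 2 →₀ ℕ) (q : MvPolynomial (Fin 2) ℝ) :
    coeff m (X i * pderiv i q) = (m i : ℝ) * coeff m q := by
  classical
  rw [coeff_X_mul']
  by_cases h : i ∈ m.support
  · rw [if_pos h, coeff_pderiv']
    have hmi : m i ≠ 0 := Finsupp.mem_support_iff.mp h
    have h1 : ((m - Finsupp.single i 1 : Fin 2 →₀ ℕ)) i = m i - 1 := by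
      simp [Finsupp.tsub_apply]
    have h2 : m - Finsupp.single i 1 + Finsupp.single i 1 = m := by
      ext j
      rcases eq_or_ne i j with rfl | hij
      · simp [Finsupp.tsub_apply]; omega
      · simp [Finsupp.tsub_apply, Finsupp.single_apply, hij]
    rw [h1, h2]
    have h3 : ((m i - 1 : ℕ) : ℝ) + 1 = (m i : ℝ) := by
      rw [Nat.cast_sub (by omega)]; push_cast; ring
    rw [h3]
  · rw [if_neg h]
    have : m i = 0 := Finsupp.notMem_support_iff.mp h
    simp [this]

lemma q_zero_of_div (q : MvPolynomial (Fin 2) ℝ)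
    (h : q + X 0 * pderiv 0 q + (q + X 1 * pderiv 1 q) = 0) : q = 0 := by
  rw [MvPolynomial.eq_zero_iff]
  intro m
  have hm := congrArg (coeff m) h
  rw [coeff_add, coeff_add, coeff_add, coeff_X_mul_pderiv, coeff_X_mul_pderiv,
    coeff_zero] at hm
  have hfac : ((2 : ℝ) + (m 0 : ℝ) + (m 1 : ℝ)) * coeff m q = 0 := by linarith
  have hne : ((2 : ℝ) + (m 0 : ℝ) + (m 1 : ℝ)) ≠ 0 := by positivity
  exact (mul_eq_zero.mp hfac).resolve_left hne

lemma inf_eq_bot (l : ℕ) : Rsp2 l ⊓ Rcsp2 l = ⊥ := by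
  rcases Nat.eq_zero_or_pos l with rfl | hl
  · rw [Rcsp2_zero, inf_bot_eq]
  · rw [eq_bot_iff]
    rintro v ⟨hv1, hv2⟩
    rw [Rsp2_eq] at hv1
    rw [Rcsp2_eq l hl] at hv2
    obtain ⟨p, -, rfl⟩ := hv1
    obtain ⟨q, -, hq⟩ := hv2
    have hdiv : pderiv 0 (rotL p 0) + pderiv 1 (rotL p 1) = 0 := by
      rw [rotL_apply]
      simp only [Matrix.cons_val_zero, Matrix.cons_val_one, Matrix.head_cons, map_neg]
      rw [pderiv01_comm]
      ring
    rw [← hq, mulXL_apply] at hdiv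
    simp only [xvec2, Matrix.cons_val_zero, Matrix.cons_val_one, Matrix.head_cons] at hdiv
    rw [pderiv_mul, pderiv_mul, pderiv_X_self (i := (0 : Fin 2)),
      pderiv_X_self (i := (1 : Fin 2))] at hdiv
    rw [show ∀ f : MvPolynomial (Fin 2) ℝ, (1 : MvPolynomial (Fin 2) ℝ) * f = f from
      fun f => one_mul f] at hdiv
    have hq0 : q = 0 := q_zero_of_div q hdiv
    rw [← hq, hq0, Submodule.mem_bot, map_zero]

/-- For every `l ≥ 0`, the ℝ²-valued polynomial fields of degree ≤ l decompose as
the direct sum ℛ^l ⊕ ℛ^{c,l}. -/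
theorem polyVec2_eq_rot_directSum_rotComplement (l : ℕ) :
    Rsp2 l ⊔ Rcsp2 l = polyVec2 l ∧ Rsp2 l ⊓ Rcsp2 l = ⊥ :=
  ⟨le_antisymm (sup_le_polyVec2 l) (polyVec2_le_sup l), inf_eq_bot l⟩
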